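/- If X is a Banach space and (x_i) is a net in X which converges weak-* (in X**) to an element x ∈ X**, then inf { ‖y‖ : y ∈ conv({x_i}) } ≤ ‖x‖, where conv denotes the convex hull. -/

import Mathlib

open NormedSpace Filter

/-- If `X` is a Banach space and `(x i)` is a net in `X` which converges weak-*
(in the bidual `X**`) to an element `Φ ∈ X**`, then
`inf { ‖y‖ : y ∈ conv {x i} } ≤ ‖Φ‖`. -/
theorem sInf_norm_convexHull_le_of_weakStar_tendsto
    (X : Type*) [NormedAddCommGroup X] [NormedSpace ℝ X] [CompleteSpace X]
    {ι : Type*} (l : Filter ι) [l.NeBot] (x : ι → X)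
    (Φ : StrongDual ℝ (StrongDual ℝ X))
    (hconv : Tendsto (fun i => StrongDual.toWeakDual (inclusionInDoubleDual ℝ X (x i))) l
      (nhds (StrongDual.toWeakDual Φ))) :
    sInf ((fun y => ‖y‖) '' (convexHull ℝ (Set.range x))) ≤ ‖Φ‖ := by
  by_contra h
  push_neg at h
  set S : Set ℝ := (fun y => ‖y‖) '' (convexHull ℝ (Set.range x)) with hS
  -- two radii strictly between ‖Φ‖ and sInf S
  set r₂ : ℝ := (‖Φ‖ + sInf S) / 2 with hr₂
  set r₁ : ℝ := (‖Φ‖ + r₂) / 2 with hr₁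
  have hΦr₂ : ‖Φ‖ < r₂ := by rw [hr₂]; linarith
  have hΦr₁ : ‖Φ‖ < r₁ := by rw [hr₁]; linarith
  have hr₁r₂ : r₁ < r₂ := by rw [hr₁]; linarith
  have hr₂inf : r₂ < sInf S := by rw [hr₂]; linarith
  have hr₁pos : 0 < r₁ := lt_of_le_of_lt (norm_nonneg Φ) hΦr₁
  have hr₂pos : 0 < r₂ := hr₁pos.trans hr₁r₂
  -- the open ball of radius r₂ is disjoint from the convex hull
  have hdisj : Disjoint (Metric.ball (0 : X) r₂) (convexHull ℝ (Set.range x)) := by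
    rw [Set.disjoint_left]
    intro a ha ha'
    have h1 : sInf S ≤ ‖a‖ := by
      apply csInf_le
      · exact ⟨0, fun b hb => by
          rcases hb with ⟨y, _, rfl⟩; exact norm_nonneg y⟩
      · exact ⟨a, ha', rfl⟩
    rw [Metric.mem_ball, dist_zero_right] at ha
    linarith
  obtain ⟨f, u, hfu, huf⟩ := geometric_hahn_banach_open (convex_ball 0 r₂)
    Metric.isOpen_ball (convex_convexHull ℝ _) hdisj
  -- u is positive
  have hu0 : 0 < u := by
    have := hfu 0 (by simpa using hr₂pos)
    simpa using this
  -- bound on ‖f‖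
  have hfb : ‖f‖ ≤ u / r₁ := by
    apply ContinuousLinearMap.opNorm_bound_of_ball_bound hr₁pos
    intro z hz
    rw [Metric.mem_closedBall, dist_zero_right] at hz
    have hz2 : ‖z‖ < r₂ := lt_of_le_of_lt hz hr₁r₂
    have h1 : f z < u := hfu z (by rwa [Metric.mem_ball, dist_zero_right])
    have h2 : f (-z) < u := hfu (-z) (by rwa [Metric.mem_ball, dist_zero_right, norm_neg])
    rw [map_neg] at h2
    rw [Real.norm_eq_abs, abs_le]
    constructor <;> linarith
  -- pass to the limit: u ≤ Φ f
  have hev : Tendsto (fun i => f (x i)) l (nhds (Φ f)) := by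
    have := ((WeakDual.eval_continuous (𝕜 := ℝ) (E := StrongDual ℝ X) f).tendsto
      (StrongDual.toWeakDual Φ)).comp hconv
    exact this
  have huΦf : u ≤ Φ f := by
    refine ge_of_tendsto hev (Eventually.of_forall fun i => ?_)
    exact huf (x i) (subset_convexHull ℝ _ ⟨i, rfl⟩)
  have hΦf : Φ f ≤ ‖Φ‖ * ‖f‖ :=
    le_trans (le_abs_self _) (Φ.le_opNorm f)
  -- derive the contradiction
  have hfpos : 0 < ‖f‖ := by
    by_contra hf0
    push_neg at hf0
    have : ‖f‖ = 0 := le_antisymm hf0 (norm_nonneg f)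
    rw [this, mul_zero] at hΦf
    linarith
  have h1 : u ≤ ‖Φ‖ * ‖f‖ := le_trans huΦf hΦf
  have h2 : r₁ * ‖f‖ ≤ u := by
    have := mul_le_mul_of_nonneg_left hfb hr₁pos.le
    rwa [mul_div_cancel₀ u (ne_of_gt hr₁pos)] at this
  have : r₁ ≤ ‖Φ‖ := by
    have h3 : r₁ * ‖f‖ ≤ ‖Φ‖ * ‖f‖ := le_trans h2 h1
    exact le_of_mul_le_mul_right (by linarith [h3]) hfpos
  linarith
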